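/- Let a profile have exactly 3 alternatives and an even number 2k of voters (k ≥ 1), suppose exactly k voters rank alternative a last and all remaining k voters rank a first. Then Condorcet's method has at least two winners at this profile. -/

import Mathlib

open Finset

attribute [local instance] Classical.propDecidable

noncomputable section

/-- A preference profile for `n` voters: each voter has a ballot, a list of
alternatives ordered from most preferred (head) to least preferred (last). -/
abbrev Profile (n : ℕ) (A : Type*) := Fin n → List A

variable {A : Type*} [DecidableEq A]

/-- A valid profile: every ballot is a strict linear order on the alternatives,
i.e. a duplicate-free list containing every alternative. -/
def IsProfile {n : ℕ} (P : Profile n A) : Prop :=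
  ∀ i, (P i).Nodup ∧ ∀ a : A, a ∈ P i

/-- The voter with ballot `l` prefers `x` to `y`. -/
def Prefers (l : List A) (x y : A) : Prop := l.idxOf x < l.idxOf y

/-- The number of voters who rank `a` last (at the bottom of their list). -/
def lastCount {n : ℕ} (P : Profile n A) (a : A) : ℕ :=
  (univ.filter fun i => (P i).getLast? = some a).card

/-- The number of voters who rank `a` first (at the top of their list). -/
def firstCount {n : ℕ} (P : Profile n A) (a : A) : ℕ :=
  (univ.filter fun i => (P i).head? = some a).card

/-- The number of voters preferring `x` to `y`. -/
def prefCount {n : ℕ} (P : Profile n A) (x y : A) : ℕ :=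
  (univ.filter fun i => Prefers (P i) x y).card

/-- `x` defeats `y` in a pairwise majority contest: strictly more voters
prefer `x` to `y` than prefer `y` to `x`. -/
def Defeats {n : ℕ} (P : Profile n A) (x y : A) : Prop :=
  prefCount P y x < prefCount P x y

/-- Condorcet's method: the winners are the alternatives defeated by no other alternative. -/
def CondorcetWinners {n : ℕ} (P : Profile n A) : Set A :=
  {a | ∀ b, ¬ Defeats P b a}

/-- `a` is a Condorcet winner: it is the unique winner of Condorcet's method. -/
def IsCondorcetWinner {n : ℕ} (P : Profile n A) (a : A) : Prop :=
  CondorcetWinners P = {a}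


section Aux
variable {A : Type*} [DecidableEq A]

lemma prefers_last (l : List A) (hnd : l.Nodup) (a b : A) (ha : a ∈ l) (hb : b ∈ l) (hab : b ≠ a)
    (h : l.getLast? = some a) : Prefers l b a := by
  have hne : l ≠ [] := List.ne_nil_of_mem ha
  have hlast : l.getLast hne = a := by
    rw [List.getLast?_eq_getLast hne] at h; exact Option.some_injective _ h
  have hpos : 0 < l.length := List.length_pos_iff.mpr hne
  have hidx : l.idxOf a = l.length - 1 := by
    rw [← hlast, List.getLast_eq_getElem]
    exact List.Nodup.idxOf_getElem hnd _ _
  have h1 : l.idxOf b < l.length := List.idxOf_lt_length_iff.mpr hb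
  have h2 : l.idxOf b ≠ l.idxOf a := fun h => hab ((List.idxOf_inj hb).mp h)
  unfold Prefers
  rw [hidx] at h2
  omega

lemma prefers_first (l : List A) (a b : A) (hab : b ≠ a) (h : l.head? = some a) :
    Prefers l a b := by
  obtain ⟨t, rfl⟩ : ∃ t, l = a :: t := by
    cases l with
    | nil => simp at h
    | cons x t => exact ⟨t, by simpa using (by simpa using h : x = a) ▸ rfl⟩
  unfold Prefers
  rw [List.idxOf_cons_self, List.idxOf_cons_ne _ hab.symm]
  omega

lemma not_prefers_self (l : List A) (x : A) : ¬ Prefers l x x := lt_irrefl _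

end Aux

/-- with exactly 3 alternatives and `2k` voters (`k ≥ 1`), if exactly
`k` voters rank `a` last and all remaining `k` voters rank `a` first, then
Condorcet's method has at least two winners. -/
theorem three_alts_half_last_two_winners {A : Type*} [Fintype A] [DecidableEq A]
    (hA : Fintype.card A = 3) {k : ℕ} (hk : 1 ≤ k)
    (P : Profile (2 * k) A) (hP : IsProfile P)
    (a : A) (hlast : lastCount P a = k)
    (hfirst : ∀ i, (P i).getLast? ≠ some a → (P i).head? = some a) :
    2 ≤ (CondorcetWinners P).ncard := by
  classical
  obtain ⟨b0, hb0⟩ : ∃ b : A, b ≠ a :=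
    Fintype.exists_ne_of_one_lt_card (by omega) a
  have hsplit : ∀ i, (P i).getLast? = some a ∨ (P i).head? = some a :=
    fun i => or_iff_not_imp_left.mpr (hfirst i)
  have hnotboth : ∀ i, ¬((P i).getLast? = some a ∧ (P i).head? = some a) := by
    rintro i ⟨hl, hh⟩
    have h1 := prefers_last (P i) (hP i).1 a b0 ((hP i).2 a) ((hP i).2 b0) hb0 hl
    have h2 := prefers_first (P i) a b0 hb0 hh
    unfold Prefers at h1 h2; omega
  have hprefba : ∀ b, b ≠ a → prefCount P b a = k := by
    intro b hb
    have : (univ.filter fun i => Prefers (P i) b a)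
        = (univ.filter fun i => (P i).getLast? = some a) := by
      ext i; simp only [mem_filter, mem_univ, true_and]
      constructor
      · intro hpref
        rcases hsplit i with h | h
        · exact h
        · have := prefers_first (P i) a b hb h
          unfold Prefers at hpref this; omega
      · exact fun h => prefers_last (P i) (hP i).1 a b ((hP i).2 a) ((hP i).2 b) hb h
    rw [prefCount, this]; exact hlast
  have hfirstk : firstCount P a = k := by
    have hdisj : Disjoint (univ.filter fun i => (P i).getLast? = some a)
        (univ.filter fun i => (P i).head? = some a) := by
      rw [Finset.disjoint_left]
      intro i hi1 hi2
      simp only [mem_filter, mem_univ, true_and] at hi1 hi2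
      exact hnotboth i ⟨hi1, hi2⟩
    have hunion : (univ.filter fun i => (P i).getLast? = some a)
        ∪ (univ.filter fun i => (P i).head? = some a) = univ := by
      apply Finset.eq_univ_of_forall
      intro i
      rcases hsplit i with h | h
      · exact Finset.mem_union_left _ (by simp [h])
      · exact Finset.mem_union_right _ (by simp [h])
    have := Finset.card_union_of_disjoint hdisj
    rw [hunion, Finset.card_univ, Fintype.card_fin] at this
    have hl' : lastCount P a = k := hlast
    unfold lastCount firstCount at *
    omega
  have hprefab : ∀ b, b ≠ a → prefCount P a b = k := by
    intro b hb
    have : (univ.filter fun i => Prefers (P i) a b)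
        = (univ.filter fun i => (P i).head? = some a) := by
      ext i; simp only [mem_filter, mem_univ, true_and]
      constructor
      · intro hpref
        rcases hsplit i with h | h
        · have := prefers_last (P i) (hP i).1 a b ((hP i).2 a) ((hP i).2 b) hb h
          unfold Prefers at hpref this; omega
        · exact h
      · exact fun h => prefers_first (P i) a b hb h
    rw [prefCount, this]; exact hfirstk
  have hnodef_self : ∀ x, ¬ Defeats P x x := fun x => lt_irrefl _
  have hnodef_a : ∀ x, ¬ Defeats P x a := by
    intro x hx
    by_cases hxa : x = a
    · exact hnodef_self a (hxa ▸ hx)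
    · unfold Defeats at hx
      rw [hprefab x hxa, hprefba x hxa] at hx
      omega
  have hnodef_by_a : ∀ x, x ≠ a → ¬ Defeats P a x := by
    intro x hx hd
    unfold Defeats at hd
    rw [hprefab x hx, hprefba x hx] at hd
    omega
  have haw : a ∈ CondorcetWinners P := hnodef_a
  -- find the two other alternatives
  obtain ⟨b, c, hbc, hE⟩ : ∃ b c, b ≠ c ∧ (univ.erase a : Finset A) = {b, c} := by
    apply Finset.card_eq_two.mp
    rw [Finset.card_erase_of_mem (Finset.mem_univ a), Finset.card_univ, hA]
  have hb : b ≠ a := by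
    have : b ∈ univ.erase a := hE ▸ (by simp)
    exact Finset.ne_of_mem_erase this
  have hc : c ≠ a := by
    have : c ∈ univ.erase a := hE ▸ (by simp)
    exact Finset.ne_of_mem_erase this
  have hall : ∀ x : A, x = a ∨ x = b ∨ x = c := by
    intro x
    by_cases hxa : x = a
    · exact Or.inl hxa
    · have : x ∈ univ.erase a := Finset.mem_erase.mpr ⟨hxa, Finset.mem_univ x⟩
      rw [hE] at this
      simp only [Finset.mem_insert, Finset.mem_singleton] at this
      exact Or.inr this
  have hsecond : ∃ w, w ≠ a ∧ w ∈ CondorcetWinners P := by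
    by_cases hD : Defeats P c b
    · refine ⟨c, hc, fun y hy => ?_⟩
      rcases hall y with hy' | hy' | hy'
      · exact hnodef_by_a c hc (hy' ▸ hy)
      · have hy2 : Defeats P b c := hy' ▸ hy
        unfold Defeats at hy2 hD; omega
      · exact hnodef_self c (hy' ▸ hy)
    · refine ⟨b, hb, fun y hy => ?_⟩
      rcases hall y with hy' | hy' | hy'
      · exact hnodef_by_a b hb (hy' ▸ hy)
      · exact hnodef_self b (hy' ▸ hy)
      · exact hD (hy' ▸ hy)
  obtain ⟨w, hwne, hw⟩ := hsecond
  have hsub : ({a, w} : Set A) ⊆ CondorcetWinners P := by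
    rintro x (rfl | rfl)
    · exact haw
    · exact hw
  calc 2 = ({a, w} : Set A).ncard := (Set.ncard_pair (Ne.symm hwne)).symm
    _ ≤ (CondorcetWinners P).ncard := Set.ncard_le_ncard hsub (Set.toFinite _)
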